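/- arXiv:1810.03060 — 4 statements merged into one kernel-verified Lean document; each statement's English description precedes it below -/
import Mathlib

section
/- Let S be a finite nonempty set of natural numbers with maximum element N, and let a(S) = Σ_{i∈S} 2^i and b(S) = Σ_{i∈S} i·2^i. Then the ceiling of the rational number b(S)/a(S) equals N. (Eiffel, Theorem 1: the index of the maximum non-empty bucket of a gradient queue equals ⌈b/a⌉.) -/
lemma gq_geom (N : ℕ) : ∑ i ∈ Finset.range N, (2 : ℚ) ^ i = 2 ^ N - 1 := by
  induction N with
  | zero => simp
  | succ n ih => rw [Finset.sum_range_succ, ih]; ring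

lemma gq_aux (N : ℕ) :
    ∑ i ∈ Finset.range N, ((N : ℚ) - 1 - i) * 2 ^ i = 2 ^ N - N - 1 := by
  induction N with
  | zero => simp
  | succ n ih =>
    rw [Finset.sum_range_succ]
    push_cast
    have : ∑ i ∈ Finset.range n, ((n : ℚ) + 1 - 1 - i) * 2 ^ i
        = (∑ i ∈ Finset.range n, ((n : ℚ) - 1 - i) * 2 ^ i)
          + ∑ i ∈ Finset.range n, (2 : ℚ) ^ i := by
      rw [← Finset.sum_add_distrib]
      exact Finset.sum_congr rfl fun i _ => by ring
    rw [this, ih, gq_geom]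
    push_cast
    ring

/-- Eiffel, Theorem 1: for a finite nonempty set `S ⊆ ℕ` of nonempty-bucket
indices with maximum `N`, letting `a = Σ_{i∈S} 2^i` and `b = Σ_{i∈S} i·2^i`,
the ceiling of the rational `b/a` equals `N`. -/
theorem gradient_queue_ceil_eq_max (S : Finset ℕ) (hS : S.Nonempty) :
    ⌈(∑ i ∈ S, (i : ℚ) * 2 ^ i) / (∑ i ∈ S, (2 : ℚ) ^ i)⌉ = (S.max' hS : ℤ) := by
  set N := S.max' hS with hN
  have hNS : N ∈ S := S.max'_mem hS
  have ha : (0 : ℚ) < ∑ i ∈ S, (2 : ℚ) ^ i :=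
    Finset.sum_pos (fun i _ => by positivity) hS
  rw [Int.ceil_eq_iff]
  constructor
  · -- (N : ℚ) - 1 < b / a
    rw [lt_div_iff₀ ha]
    -- show (N-1) * a < b, i.e. 0 < b - (N-1)*a
    have key : (0 : ℚ) < ∑ i ∈ S, ((i : ℚ) - ((N : ℚ) - 1)) * 2 ^ i := by
      rw [← Finset.add_sum_erase _ _ hNS]
      have h1 : ((N : ℚ) - ((N : ℚ) - 1)) * 2 ^ N = 2 ^ N := by ring
      have hsub : S.erase N ⊆ Finset.range N := by
        intro i hi
        rw [Finset.mem_range]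
        exact lt_of_le_of_ne (S.le_max' i (Finset.mem_of_mem_erase hi))
          (Finset.ne_of_mem_erase hi)
      have h2 : ∑ i ∈ S.erase N, (((N : ℚ) - 1) - i) * 2 ^ i ≤
          ∑ i ∈ Finset.range N, (((N : ℚ) - 1) - i) * 2 ^ i := by
        apply Finset.sum_le_sum_of_subset_of_nonneg hsub
        intro i hi _
        have : (i : ℚ) ≤ (N : ℚ) - 1 := by
          have : i + 1 ≤ N := Finset.mem_range.mp hi
          have := (Nat.cast_le (α := ℚ)).mpr this
          push_cast at this; linarith
        have h2i : (0:ℚ) ≤ 2 ^ i := by positivity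
        nlinarith
      rw [gq_aux] at h2
      have h3 : ∑ i ∈ S.erase N, ((i : ℚ) - ((N : ℚ) - 1)) * 2 ^ i =
          - ∑ i ∈ S.erase N, (((N : ℚ) - 1) - i) * 2 ^ i := by
        rw [← Finset.sum_neg_distrib]
        exact Finset.sum_congr rfl fun i _ => by ring
      have hNpos : (0 : ℚ) ≤ (N : ℚ) := Nat.cast_nonneg N
      rw [h1, h3]
      linarith
    have expand : ∑ i ∈ S, ((i : ℚ) - ((N : ℚ) - 1)) * 2 ^ i =
        (∑ i ∈ S, (i : ℚ) * 2 ^ i) - ((N : ℚ) - 1) * ∑ i ∈ S, (2 : ℚ) ^ i := by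
      rw [Finset.mul_sum, ← Finset.sum_sub_distrib]
      exact Finset.sum_congr rfl fun i _ => by ring
    rw [expand] at key
    push_cast
    linarith
  · -- b / a ≤ N
    rw [div_le_iff₀ ha, Finset.mul_sum]
    push_cast
    apply Finset.sum_le_sum
    intro i hi
    have : (i : ℚ) ≤ (N : ℚ) := Nat.cast_le.mpr (S.le_max' i hi)
    have h2i : (0:ℚ) ≤ 2 ^ i := by positivity
    nlinarith
end

section
/- Let S be a finite nonempty set of natural numbers with maximum element N, and let a(S) = Σ_{i∈S} 2^i and b(S) = Σ_{i∈S} i·2^i. Then (N−1)·a(S) < b(S) as integers; equivalently, the critical point b(S)/a(S) is strictly greater than N−1. (Lower bound on the critical point of the gradient queue in the proof of Theorem 1.) -/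
lemma geom2_aux (n : ℕ) : ∑ i ∈ Finset.range n, (2 : ℤ) ^ i = 2 ^ n - 1 := by
  induction n with
  | zero => simp
  | succ n ih => rw [Finset.sum_range_succ, ih]; ring

lemma range_aux (n : ℕ) :
    ∑ i ∈ Finset.range n, ((n : ℤ) - 1 - i) * 2 ^ i = 2 ^ n - n - 1 := by
  induction n with
  | zero => simp
  | succ n ih =>
    rw [Finset.sum_range_succ]
    have h : ∀ i ∈ Finset.range n, (((n + 1 : ℕ) : ℤ) - 1 - i) * 2 ^ i
        = ((n : ℤ) - 1 - i) * 2 ^ i + 2 ^ i := by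
      intro i _
      push_cast
      ring
    rw [Finset.sum_congr rfl h, Finset.sum_add_distrib, ih, geom2_aux]
    push_cast
    ring

/-- Lower bound on the critical point of the gradient queue: with
`a = Σ_{i∈S} 2^i` and `b = Σ_{i∈S} i·2^i` and `N = max S`, one has
`(N−1)·a < b` as integers, i.e. `b/a > N − 1`. -/
theorem gradient_queue_critical_point_lower_bound (S : Finset ℕ) (hS : S.Nonempty) :
    ((S.max' hS : ℤ) - 1) * (∑ i ∈ S, (2 : ℤ) ^ i) < ∑ i ∈ S, (i : ℤ) * 2 ^ i := by
  set N := S.max' hS with hN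
  have hmem : N ∈ S := S.max'_mem hS
  have key : (0 : ℤ) < ∑ i ∈ S, ((i : ℤ) - N + 1) * 2 ^ i := by
    have hsplit : ∑ i ∈ S.erase N, ((i : ℤ) - N + 1) * 2 ^ i + ((N : ℤ) - N + 1) * 2 ^ N
        = ∑ i ∈ S, ((i : ℤ) - N + 1) * 2 ^ i :=
      Finset.sum_erase_add S _ hmem
    have hsub : S.erase N ⊆ Finset.range N := by
      intro i hi
      have hiS := Finset.mem_of_mem_erase hi
      have hne := Finset.ne_of_mem_erase hi
      have := S.le_max' i hiS
      exact Finset.mem_range.mpr (lt_of_le_of_ne this hne)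
    have hbound : ∑ i ∈ S.erase N, ((N : ℤ) - 1 - i) * 2 ^ i
        ≤ ∑ i ∈ Finset.range N, ((N : ℤ) - 1 - i) * 2 ^ i := by
      apply Finset.sum_le_sum_of_subset_of_nonneg hsub
      intro i hi _
      have : (i : ℤ) ≤ (N : ℤ) - 1 := by
        have := Finset.mem_range.mp hi
        omega
      have h2 : (0 : ℤ) ≤ 2 ^ i := by positivity
      nlinarith
    have hneg : ∑ i ∈ S.erase N, ((i : ℤ) - N + 1) * 2 ^ i
        = -∑ i ∈ S.erase N, ((N : ℤ) - 1 - i) * 2 ^ i := by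
      rw [← Finset.sum_neg_distrib]
      apply Finset.sum_congr rfl
      intro i _
      ring
    rw [← hsplit, hneg, range_aux] at *
    have hN0 : (0 : ℤ) ≤ (N : ℤ) := by positivity
    linarith
  have expand : ∑ i ∈ S, ((i : ℤ) - N + 1) * 2 ^ i
      = ∑ i ∈ S, (i : ℤ) * 2 ^ i - ((N : ℤ) - 1) * ∑ i ∈ S, (2 : ℤ) ^ i := by
    rw [Finset.mul_sum, ← Finset.sum_sub_distrib]
    apply Finset.sum_congr rfl
    intro i _
    ring
  linarith [key, expand.symm ▸ key]
end

section
/- Let N ≥ 1 be a natural number and let S be any subset of {1, …, N} containing N. With a(S) = Σ_{i∈S} 2^i and b(S) = Σ_{i∈S} i·2^i, and with F = {1, …, N} the full set, one has b(S)·a(F) ≥ b(F)·a(S); equivalently, the critical point b(S)/a(S) is minimized, over all occupancy patterns whose maximal nonempty bucket is N, by the all-ones pattern F. (Extremality/ordering claim in the proof of Theorem 1: among all N-bit strings whose N-th bit is 1, the minimum critical point is attained when all buckets are nonempty.) -/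
lemma gq_two_pow_sum (n : ℕ) : (∑ i ∈ Finset.range n, 2 ^ i) = 2 ^ n - 1 := by
  induction n with
  | zero => simp
  | succ n ih =>
    rw [Finset.sum_range_succ, ih, pow_succ]
    have : 1 ≤ 2 ^ n := Nat.one_le_two_pow
    omega

/-- Key sum bound: `∑_{i=1}^{M} (M-i)·2^i ≤ 2^{M+1}`. -/
lemma gq_aux_sum_bound (M : ℕ) :
    (∑ i ∈ Finset.Icc 1 M, (M - i) * 2 ^ i) ≤ 2 ^ (M + 1) := by
  induction M with
  | zero => simp
  | succ M ih =>
    have h1 : (∑ i ∈ Finset.Icc 1 (M + 1), (M + 1 - i) * 2 ^ i)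
        = (∑ i ∈ Finset.Icc 1 M, (M + 1 - i) * 2 ^ i) := by
      rw [Finset.sum_Icc_succ_top (by omega)]
      simp
    have h2 : (∑ i ∈ Finset.Icc 1 M, (M + 1 - i) * 2 ^ i)
        = (∑ i ∈ Finset.Icc 1 M, (M - i) * 2 ^ i) + ∑ i ∈ Finset.Icc 1 M, 2 ^ i := by
      rw [← Finset.sum_add_distrib]
      apply Finset.sum_congr rfl
      intro i hi
      simp only [Finset.mem_Icc] at hi
      have : M + 1 - i = (M - i) + 1 := by omega
      rw [this]; ring
    have h3 : (∑ i ∈ Finset.Icc 1 M, 2 ^ i) ≤ 2 ^ (M + 1) := by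
      calc (∑ i ∈ Finset.Icc 1 M, 2 ^ i) ≤ ∑ i ∈ Finset.range (M + 1), 2 ^ i := by
            apply Finset.sum_le_sum_of_subset
            intro i hi
            simp only [Finset.mem_Icc] at hi
            simp only [Finset.mem_range]
            omega
        _ = 2 ^ (M + 1) - 1 := gq_two_pow_sum (M + 1)
        _ ≤ 2 ^ (M + 1) := by omega
    calc (∑ i ∈ Finset.Icc 1 (M + 1), (M + 1 - i) * 2 ^ i)
        = (∑ i ∈ Finset.Icc 1 M, (M - i) * 2 ^ i) + ∑ i ∈ Finset.Icc 1 M, 2 ^ i := by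
          rw [h1, h2]
      _ ≤ 2 ^ (M + 1) + 2 ^ (M + 1) := Nat.add_le_add ih h3
      _ = 2 ^ (M + 1 + 1) := by ring

/-- For `S ⊆ Icc 1 N` with `N ∈ S`, `(N-1) · a(S) ≤ b(S)`. -/
lemma gq_aux_avg (N : ℕ) (hN : 1 ≤ N) (S : Finset ℕ)
    (hSsub : S ⊆ Finset.Icc 1 N) (hNS : N ∈ S) :
    (N - 1) * (∑ i ∈ S, 2 ^ i) ≤ ∑ i ∈ S, i * 2 ^ i := by
  set S' := S.erase N with hS'def
  have hins : S = insert N S' := (Finset.insert_erase hNS).symm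
  have hnot : N ∉ S' := Finset.notMem_erase _ _
  have hS'sub : S' ⊆ Finset.Icc 1 (N - 1) := by
    intro i hi
    have h1 := hSsub (Finset.mem_of_mem_erase hi)
    have h2 : i ≠ N := Finset.ne_of_mem_erase hi
    simp only [Finset.mem_Icc] at h1 ⊢
    omega
  have ha : (∑ i ∈ S, 2 ^ i) = 2 ^ N + ∑ i ∈ S', 2 ^ i := by
    rw [hins, Finset.sum_insert hnot]
  have hb : (∑ i ∈ S, i * 2 ^ i) = N * 2 ^ N + ∑ i ∈ S', i * 2 ^ i := by
    rw [hins, Finset.sum_insert hnot]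
  rw [ha, hb, Nat.mul_add]
  have hsplit : (N - 1) * (∑ i ∈ S', 2 ^ i)
      = (∑ i ∈ S', i * 2 ^ i) + ∑ i ∈ S', (N - 1 - i) * 2 ^ i := by
    rw [Finset.mul_sum, ← Finset.sum_add_distrib]
    apply Finset.sum_congr rfl
    intro i hi
    have h1 := hS'sub hi
    simp only [Finset.mem_Icc] at h1
    have : N - 1 = i + (N - 1 - i) := by omega
    conv_lhs => rw [this]
    ring
  have htail : (∑ i ∈ S', (N - 1 - i) * 2 ^ i) ≤ 2 ^ N := by
    calc (∑ i ∈ S', (N - 1 - i) * 2 ^ i)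
        ≤ ∑ i ∈ Finset.Icc 1 (N - 1), (N - 1 - i) * 2 ^ i :=
          Finset.sum_le_sum_of_subset hS'sub
      _ ≤ 2 ^ (N - 1 + 1) := gq_aux_sum_bound (N - 1)
      _ = 2 ^ N := by congr 1; omega
  have hN2 : (N - 1) * 2 ^ N + 2 ^ N ≤ N * 2 ^ N := by
    have : (N - 1) * 2 ^ N + 2 ^ N = (N - 1 + 1) * 2 ^ N := by ring
    rw [this]
    have : N - 1 + 1 = N := by omega
    rw [this]
  calc (N - 1) * 2 ^ N + (N - 1) * ∑ i ∈ S', 2 ^ i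
      = (N - 1) * 2 ^ N + ((∑ i ∈ S', i * 2 ^ i) + ∑ i ∈ S', (N - 1 - i) * 2 ^ i) := by
        rw [hsplit]
    _ ≤ (N - 1) * 2 ^ N + ((∑ i ∈ S', i * 2 ^ i) + 2 ^ N) := by
        exact Nat.add_le_add_left (Nat.add_le_add_left htail _) _
    _ = ((N - 1) * 2 ^ N + 2 ^ N) + ∑ i ∈ S', i * 2 ^ i := by ring
    _ ≤ N * 2 ^ N + ∑ i ∈ S', i * 2 ^ i := Nat.add_le_add_right hN2 _

/-- Extremality claim (proof of Theorem 1): for `N ≥ 1` and any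
`S ⊆ {1,…,N}` with `N ∈ S`, letting `F = {1,…,N}`, one has
`b(S)·a(F) ≥ b(F)·a(S)`, i.e. among all patterns whose maximal nonempty
bucket is `N`, the critical point `b/a` is minimized by the all-ones
pattern. -/
theorem gradient_queue_all_ones_minimizes (N : ℕ) (hN : 1 ≤ N) (S : Finset ℕ)
    (hSsub : S ⊆ Finset.Icc 1 N) (hNS : N ∈ S) :
    (∑ i ∈ Finset.Icc 1 N, i * 2 ^ i) * (∑ i ∈ S, 2 ^ i) ≤
      (∑ i ∈ S, i * 2 ^ i) * (∑ i ∈ Finset.Icc 1 N, 2 ^ i) := by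
  set T := Finset.Icc 1 N \ S with hT
  have haF : (∑ i ∈ Finset.Icc 1 N, 2 ^ i) = (∑ i ∈ T, 2 ^ i) + ∑ i ∈ S, 2 ^ i :=
    (Finset.sum_sdiff hSsub).symm
  have hbF : (∑ i ∈ Finset.Icc 1 N, i * 2 ^ i)
      = (∑ i ∈ T, i * 2 ^ i) + ∑ i ∈ S, i * 2 ^ i :=
    (Finset.sum_sdiff hSsub).symm
  rw [haF, hbF]
  have hkey := gq_aux_avg N hN S hSsub hNS
  have hmain : (∑ i ∈ T, i * 2 ^ i) * (∑ i ∈ S, 2 ^ i) ≤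
      (∑ i ∈ S, i * 2 ^ i) * (∑ i ∈ T, 2 ^ i) := by
    calc (∑ i ∈ T, i * 2 ^ i) * (∑ i ∈ S, 2 ^ i)
        = ∑ j ∈ T, j * 2 ^ j * (∑ i ∈ S, 2 ^ i) := Finset.sum_mul ..
      _ ≤ ∑ j ∈ T, (∑ i ∈ S, i * 2 ^ i) * 2 ^ j := by
          apply Finset.sum_le_sum
          intro j hj
          have hjT : j ∈ Finset.Icc 1 N ∧ j ∉ S := by
            simpa [hT, Finset.mem_sdiff] using hj
          have hjle : j ≤ N - 1 := by
            have h1 := hjT.1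
            simp only [Finset.mem_Icc] at h1
            have h2 : j ≠ N := fun h => hjT.2 (h ▸ hNS)
            omega
          calc j * 2 ^ j * (∑ i ∈ S, 2 ^ i)
              = (j * ∑ i ∈ S, 2 ^ i) * 2 ^ j := by ring
            _ ≤ ((N - 1) * ∑ i ∈ S, 2 ^ i) * 2 ^ j := by
                apply Nat.mul_le_mul_right
                exact Nat.mul_le_mul_right _ hjle
            _ ≤ (∑ i ∈ S, i * 2 ^ i) * 2 ^ j := Nat.mul_le_mul_right _ hkey
      _ = (∑ i ∈ S, i * 2 ^ i) * (∑ j ∈ T, 2 ^ j) := by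
          rw [Finset.mul_sum]
  calc ((∑ i ∈ T, i * 2 ^ i) + ∑ i ∈ S, i * 2 ^ i) * (∑ i ∈ S, 2 ^ i)
      = (∑ i ∈ T, i * 2 ^ i) * (∑ i ∈ S, 2 ^ i)
        + (∑ i ∈ S, i * 2 ^ i) * (∑ i ∈ S, 2 ^ i) := add_mul _ _ _
    _ ≤ (∑ i ∈ S, i * 2 ^ i) * (∑ i ∈ T, 2 ^ i)
        + (∑ i ∈ S, i * 2 ^ i) * (∑ i ∈ S, 2 ^ i) := Nat.add_le_add_right hmain _
    _ = (∑ i ∈ S, i * 2 ^ i) * ((∑ i ∈ T, 2 ^ i) + ∑ i ∈ S, 2 ^ i) := (mul_add _ _ _).symm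
end

section
/- Let α ≥ 1 and m ≥ 1 be natural numbers and let S = {α, 2α, …, mα} be the set of the first m positive multiples of α. With the approximate weight base r = 2^{1/α}, set a = Σ_{i∈S} r^i and b = Σ_{i∈S} i·r^i (real numbers). Then α·(m−1) < b/a ≤ α·m; equivalently, ⌈b/(α·a)⌉ = m, so the critical point identifies the maximal occupied bucket mα to within α. (Appendix B, first case: elements evenly distributed over the queue with frequency 1/α behave as an exact gradient queue with m elements.) -/
lemma sum_pow_closed (m : ℕ) : ∑ k ∈ Finset.Icc 1 m, (2:ℝ)^k = 2^(m+1) - 2 := by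
  induction m with
  | zero => simp
  | succ n ih =>
    rw [Finset.sum_Icc_succ_top (by omega), ih]
    ring

lemma sum_mul_pow_closed (m : ℕ) :
    ∑ k ∈ Finset.Icc 1 m, (k:ℝ) * 2^k = ((m:ℝ)-1) * 2^(m+1) + 2 := by
  induction m with
  | zero => simp
  | succ n ih =>
    rw [Finset.sum_Icc_succ_top (by omega), ih]
    push_cast
    ring

lemma two_pow_ge (m : ℕ) : (m:ℝ) + 1 ≤ 2^m := by
  have := (Nat.lt_two_pow_self (n := m))
  have : (m:ℝ) + 1 ≤ ((2^m : ℕ) : ℝ) := by exact_mod_cast this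
  simpa using this

/-- Appendix B, first case: elements evenly spaced with frequency `1/α`.
For `α, m ≥ 1`, `S = {α, 2α, …, mα}`, and weight base `r = 2^{1/α}`, with
`a = Σ_{i∈S} r^i` and `b = Σ_{i∈S} i·r^i`, one has
`α·(m−1) < b/a ≤ α·m`, i.e. `⌈b/(α·a)⌉ = m`: the approximate queue behaves
as an exact gradient queue with `m` elements. -/
theorem approx_gradient_queue_even_spacing (α m : ℕ) (hα : 1 ≤ α) (hm : 1 ≤ m) :
    let r : ℝ := (2 : ℝ) ^ ((α : ℝ)⁻¹)
    let S : Finset ℕ := (Finset.Icc 1 m).image (fun k => k * α)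
    let a : ℝ := ∑ i ∈ S, r ^ i
    let b : ℝ := ∑ i ∈ S, (i : ℝ) * r ^ i
    (α : ℝ) * ((m : ℝ) - 1) < b / a ∧ b / a ≤ (α : ℝ) * m ∧
      ⌈b / ((α : ℝ) * a)⌉ = (m : ℤ) := by
  intro r S a b
  have hα0 : (α:ℝ) ≠ 0 := by positivity
  have hαpos : (0:ℝ) < α := by positivity
  have hr : ∀ k : ℕ, r ^ (k * α) = (2:ℝ)^k := by
    intro k
    have : ((α:ℝ)⁻¹) * ((k*α : ℕ) : ℝ) = (k:ℝ) := by
      push_cast; field_simp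
    rw [show r ^ (k*α) = ((2:ℝ) ^ ((α:ℝ)⁻¹)) ^ ((k*α : ℕ):ℝ) from
      (Real.rpow_natCast _ _).symm, ← Real.rpow_mul (by norm_num), this,
      Real.rpow_natCast]
  have hinj : Set.InjOn (fun k => k * α) (Finset.Icc 1 m) := by
    intro x _ y _ h
    exact Nat.eq_of_mul_eq_mul_right hα h
  have ha : a = 2^(m+1) - 2 := by
    rw [show a = ∑ i ∈ S, r ^ i from rfl, Finset.sum_image hinj]
    simp only [hr]
    exact sum_pow_closed m
  have hb : b = (α:ℝ) * (((m:ℝ)-1) * 2^(m+1) + 2) := by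
    rw [show b = ∑ i ∈ S, (i:ℝ) * r ^ i from rfl, Finset.sum_image hinj]
    simp only [hr]
    push_cast
    rw [← sum_mul_pow_closed m, Finset.mul_sum]
    apply Finset.sum_congr rfl
    intro k _
    ring
  set A : ℝ := 2^(m+1) - 2 with hA
  set B : ℝ := ((m:ℝ)-1) * 2^(m+1) + 2 with hB
  have hm1 : (1:ℝ) ≤ m := by exact_mod_cast hm
  have hApos : (0:ℝ) < A := by
    rw [hA]
    have h2 : (4:ℝ) ≤ 2^(m+1) := by
      calc (4:ℝ) = 2^2 := by norm_num
      _ ≤ 2^(m+1) := pow_le_pow_right₀ (by norm_num) (by omega)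
    linarith
  have h2pow : (m:ℝ) + 1 ≤ 2^m := two_pow_ge m
  have hlt : ((m:ℝ) - 1) * A < B := by
    rw [hA, hB]; nlinarith
  have hle : B ≤ (m:ℝ) * A := by
    rw [hA, hB]
    have : (2:ℝ)^(m+1) = 2 * 2^m := by ring
    nlinarith
  have key1 : (m:ℝ) - 1 < B / A := (lt_div_iff₀ hApos).mpr hlt
  have key2 : B / A ≤ (m:ℝ) := (div_le_iff₀ hApos).mpr hle
  have hba : b / a = (α:ℝ) * (B / A) := by
    rw [ha, hb]; field_simp
  have hba2 : b / ((α:ℝ) * a) = B / A := by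
    rw [ha, hb]; field_simp
  refine ⟨?_, ?_, ?_⟩
  · rw [hba]; exact (mul_lt_mul_iff_right₀ hαpos).mpr key1
  · rw [hba]; exact (mul_le_mul_iff_right₀ hαpos).mpr key2
  · rw [hba2, Int.ceil_eq_iff]
    constructor
    · push_cast; linarith
    · push_cast; linarith
end
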